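/- arXiv:2104.05942 — 3 statements merged into one kernel-verified Lean document; each statement's English description precedes it below -/
import Mathlib

section
/- If a scalar function σ: ℝ → ℝ is slope-restricted in [0,1], i.e. 0 ≤ (σ(y)−σ(x))/(y−x) ≤ 1 for all x ≠ y, then for any vectors v, Δv ∈ ℝ^q (with σ applied elementwise), any diagonal matrix Λ with positive diagonal entries, and Δw := σ(v+Δv) − σ(v), the incremental quadratic constraint Δvᵀ Λ Δw + Δwᵀ Λ Δv − 2 Δwᵀ Λ Δw ≥ 0 holds. -/
open Matrix

lemma key_scalar (σ : ℝ → ℝ)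
    (hσ : ∀ x y : ℝ, x ≠ y → 0 ≤ (σ y - σ x) / (y - x) ∧ (σ y - σ x) / (y - x) ≤ 1)
    (x d : ℝ) : 0 ≤ d * (σ (x + d) - σ x) - (σ (x + d) - σ x) ^ 2 := by
  rcases eq_or_ne d 0 with h | h
  · simp [h]
  · have hne : x ≠ x + d := by intro hc; apply h; linarith
    obtain ⟨h1, h2⟩ := hσ x (x + d) hne
    have hd : x + d - x = d := by ring
    rw [hd] at h1 h2
    set w := σ (x + d) - σ x with hw
    set s := w / d with hs
    have hwd : w = s * d := by rw [hs, div_mul_cancel₀ w h]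
    rw [hwd]
    have := mul_nonneg (mul_nonneg h1 (sub_nonneg.mpr h2)) (sq_nonneg d)
    nlinarith [this]

/-- incremental quadratic constraint for slope-restricted nonlinearities. -/
theorem slope_restricted_incremental_qc {q : ℕ} (σ : ℝ → ℝ)
    (hσ : ∀ x y : ℝ, x ≠ y → 0 ≤ (σ y - σ x) / (y - x) ∧ (σ y - σ x) / (y - x) ≤ 1)
    (v Δv : Fin q → ℝ) (lam : Fin q → ℝ) (hlam : ∀ i, 0 < lam i)
    (Λ : Matrix (Fin q) (Fin q) ℝ) (hΛ : Λ = Matrix.diagonal lam)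
    (Δw : Fin q → ℝ) (hΔw : Δw = fun i => σ (v i + Δv i) - σ (v i)) :
    0 ≤ Δv ⬝ᵥ (Λ *ᵥ Δw) + Δw ⬝ᵥ (Λ *ᵥ Δv) - 2 * (Δw ⬝ᵥ (Λ *ᵥ Δw)) := by
  subst hΛ hΔw
  simp only [mulVec_diagonal, dotProduct, Finset.mul_sum]
  rw [← Finset.sum_add_distrib, ← Finset.sum_sub_distrib]
  apply Finset.sum_nonneg
  intro i _
  have := key_scalar σ hσ (v i) (Δv i)
  have hl := hlam i
  nlinarith [this, hl]
end

section
/- Let Q ∈ ℝ^{p×p} be symmetric negative definite, R ∈ ℝ^{m×m} symmetric, S ∈ ℝ^{m×p}, with R − S Q⁻¹ Sᵀ ≻ 0. Factor L_Qᵀ L_Q = −Q and L_Rᵀ L_R = R − S Q⁻¹ Sᵀ with L_Q, L_R invertible, and let Z ∈ ℝ^{p×m} satisfy I − Zᵀ Z ≻ 0. Then D := −Q⁻¹ Sᵀ + L_Q⁻¹ Z L_R satisfies R + S D + Dᵀ Sᵀ + Dᵀ Q D ≻ 0. -/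
open Matrix

lemma posdef_congr {n : ℕ} {A B : Matrix (Fin n) (Fin n) ℝ}
    (hA : A.PosDef) (hB : IsUnit B) : (Bᵀ * A * B).PosDef := by
  have hsd : (Bᵀ * A * B).PosSemidef := by
    simpa using hA.posSemidef.conjTranspose_mul_mul_same B
  refine PosDef.of_dotProduct_mulVec_pos hsd.1 fun x hx => ?_
  have hinj : Function.Injective B.mulVec := mulVec_injective_iff_isUnit.mpr hB
  have hBx : B *ᵥ x ≠ 0 := fun h => hx (hinj (by simpa using h))
  have h := hA.dotProduct_mulVec_pos hBx
  simpa only [star_trivial, dotProduct_mulVec, ← Matrix.vecMul_vecMul,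
    vecMul_transpose] using h

/-- construction of D₂₂ satisfying R + SD + DᵀSᵀ + DᵀQD ≻ 0. -/
theorem D22_construction {p m : ℕ}
    (Q : Matrix (Fin p) (Fin p) ℝ) (R : Matrix (Fin m) (Fin m) ℝ)
    (S : Matrix (Fin m) (Fin p) ℝ)
    (hQ : (-Q).PosDef) (hR : R.IsSymm)
    (hRS : (R - S * Q⁻¹ * Sᵀ).PosDef)
    (LQ : Matrix (Fin p) (Fin p) ℝ) (LR : Matrix (Fin m) (Fin m) ℝ)
    (hLQ : LQᵀ * LQ = -Q) (hLR : LRᵀ * LR = R - S * Q⁻¹ * Sᵀ)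
    (hLQu : IsUnit LQ) (hLRu : IsUnit LR)
    (Z : Matrix (Fin p) (Fin m) ℝ) (hZ : (1 - Zᵀ * Z).PosDef)
    (D : Matrix (Fin p) (Fin m) ℝ)
    (hD : D = -(Q⁻¹ * Sᵀ) + LQ⁻¹ * Z * LR) :
    (R + S * D + Dᵀ * Sᵀ + Dᵀ * Q * D).PosDef := by
  have key : R + S * D + Dᵀ * Sᵀ + Dᵀ * Q * D = LRᵀ * (1 - Zᵀ * Z) * LR := by
      have hQu : IsUnit Q := by simpa using hQ.isUnit.neg
      have hQd : IsUnit Q.det := (isUnit_iff_isUnit_det Q).mp hQu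
      have e1 : Q * Q⁻¹ = 1 := mul_nonsing_inv Q hQd
      have hLQd : IsUnit LQ.det := (isUnit_iff_isUnit_det LQ).mp hLQu
      have hLQ1 : LQ * LQ⁻¹ = 1 := mul_nonsing_inv LQ hLQd
      have hLQT1 : LQᵀ⁻¹ * LQᵀ = 1 := nonsing_inv_mul LQᵀ (by rwa [det_transpose])
      have hQeq : Q = -(LQᵀ * LQ) := by rw [hLQ, neg_neg]
      have hQLQi : Q * LQ⁻¹ = -LQᵀ := by
        rw [hQeq, neg_mul, Matrix.mul_assoc, hLQ1, Matrix.mul_one]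
      have hQD : Q * D = -Sᵀ - LQᵀ * (Z * LR) := by
        calc Q * D = -(Q * Q⁻¹ * Sᵀ) + (Q * LQ⁻¹) * (Z * LR) := by
              rw [hD]
              simp only [Matrix.mul_add, Matrix.mul_neg, Matrix.neg_mul, Matrix.mul_assoc]
          _ = -Sᵀ - LQᵀ * (Z * LR) := by
              rw [e1, hQLQi]
              simp only [Matrix.one_mul, Matrix.neg_mul, sub_eq_add_neg]
      have h5 : LQᵀ * (LQ * Q⁻¹) = -1 := by
        rw [← Matrix.mul_assoc, hLQ, Matrix.neg_mul, e1]
      have hLQQi : LQ * Q⁻¹ = -LQᵀ⁻¹ := by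
        calc LQ * Q⁻¹ = LQᵀ⁻¹ * (LQᵀ * (LQ * Q⁻¹)) := by
              rw [← Matrix.mul_assoc, hLQT1, Matrix.one_mul]
          _ = -LQᵀ⁻¹ := by rw [h5, Matrix.mul_neg, Matrix.mul_one]
      have hLQD : LQ * D = LQᵀ⁻¹ * Sᵀ + Z * LR := by
        calc LQ * D = -((LQ * Q⁻¹) * Sᵀ) + (LQ * LQ⁻¹) * (Z * LR) := by
              rw [hD]
              simp only [Matrix.mul_add, Matrix.mul_neg, Matrix.neg_mul, Matrix.mul_assoc]
          _ = LQᵀ⁻¹ * Sᵀ + Z * LR := by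
              rw [hLQQi, hLQ1]
              simp only [Matrix.neg_mul, neg_neg, Matrix.one_mul]
      have h7 : (LQ * D)ᵀ = S * LQ⁻¹ + LRᵀ * Zᵀ := by
        rw [hLQD]
        simp [transpose_add, transpose_mul, transpose_nonsing_inv]
      have h6 : Dᵀ * Q * D = -(Dᵀ * Sᵀ) - (S * LQ⁻¹ + LRᵀ * Zᵀ) * (Z * LR) := by
        rw [Matrix.mul_assoc, hQD, ← h7, Matrix.mul_sub, Matrix.mul_neg, transpose_mul,
          ← Matrix.mul_assoc]
      have hSD : S * D = -(S * (Q⁻¹ * Sᵀ)) + S * (LQ⁻¹ * (Z * LR)) := by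
        rw [hD]
        simp only [Matrix.mul_add, Matrix.mul_neg, Matrix.mul_assoc]
      calc R + S * D + Dᵀ * Sᵀ + Dᵀ * Q * D
          = R + S * D - (S * (LQ⁻¹ * (Z * LR)) + LRᵀ * (Zᵀ * (Z * LR))) := by
            rw [h6]
            simp only [Matrix.add_mul, Matrix.mul_assoc]
            abel
        _ = R - S * Q⁻¹ * Sᵀ - LRᵀ * (Zᵀ * (Z * LR)) := by
            rw [hSD]
            simp only [Matrix.mul_assoc]
            abel
        _ = LRᵀ * (1 - Zᵀ * Z) * LR := by
            rw [← hLR]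
            simp only [Matrix.mul_sub, Matrix.sub_mul, Matrix.mul_one, Matrix.one_mul,
              Matrix.mul_assoc]
  rw [key]
  exact posdef_congr hZ hLRu
end

section
/- The deep feedforward network as an equilibrium network: let W₀,…,W_L be weight matrices and b₀,…,b_L bias vectors of an L-layer network z₀ = u, z_{l+1} = σ(W_l z_l + b_l), y = W_L z_L + b_L, with σ elementwise. Define w = (z₁,…,z_L), the block strictly-lower-bidiagonal matrix D₁₁ with blocks W₁,…,W_{L−1} on the first subdiagonal, D₁₂ = (W₀; 0; …; 0), b_v = (b₀,…,b_{L−1}), D₂₁ = (0,…,0, W_L), b_y = b_L. Then w is the unique solution of the implicit equation w = σ(D₁₁ w + D₁₂ u + b_v), and the network output satisfies y = D₂₁ w + b_y. -/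
open Matrix

/-- an L-layer feedforward network is an equilibrium network whose
implicit equation has the stacked layer outputs as its unique solution. -/
theorem feedforward_as_equilibrium_network {L h m p : ℕ} (hL : 0 < L)
    (σ : ℝ → ℝ)
    (W0 : Matrix (Fin h) (Fin m) ℝ)
    (Wh : ℕ → Matrix (Fin h) (Fin h) ℝ)
    (WL : Matrix (Fin p) (Fin h) ℝ)
    (b : ℕ → Fin h → ℝ) (bL : Fin p → ℝ)
    (u : Fin m → ℝ)
    (z : ℕ → Fin h → ℝ)
    (hz1 : z 1 = fun i => σ ((W0 *ᵥ u) i + b 0 i))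
    (hzs : ∀ l : ℕ, 1 ≤ l → z (l + 1) = fun i => σ ((Wh l *ᵥ z l) i + b l i))
    (w : Fin L × Fin h → ℝ) (hw : w = fun kj => z (kj.1.val + 1) kj.2)
    (D11 : Matrix (Fin L × Fin h) (Fin L × Fin h) ℝ)
    (hD11 : D11 = fun kj k'j' => if kj.1.val = k'j'.1.val + 1 then Wh kj.1.val kj.2 k'j'.2 else 0)
    (D12 : Matrix (Fin L × Fin h) (Fin m) ℝ)
    (hD12 : D12 = fun kj j => if kj.1.val = 0 then W0 kj.2 j else 0)
    (bv : Fin L × Fin h → ℝ) (hbv : bv = fun kj => b kj.1.val kj.2)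
    (D21 : Matrix (Fin p) (Fin L × Fin h) ℝ)
    (hD21 : D21 = fun i kj => if kj.1.val = L - 1 then WL i kj.2 else 0) :
    (w = fun kj => σ ((D11 *ᵥ w) kj + (D12 *ᵥ u) kj + bv kj)) ∧
    (∀ w' : Fin L × Fin h → ℝ,
      (w' = fun kj => σ ((D11 *ᵥ w') kj + (D12 *ᵥ u) kj + bv kj)) → w' = w) ∧
    (fun i => (WL *ᵥ z L) i + bL i) = (fun i => (D21 *ᵥ w) i + bL i) := by
  subst hD11 hD12 hbv hD21
  -- D12 * u
  have hD12v : ∀ k : Fin L, ∀ j : Fin h,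
      ((fun kj j => if kj.1.val = 0 then W0 kj.2 j else 0 : Matrix (Fin L × Fin h) (Fin m) ℝ) *ᵥ u) (k, j)
        = if k.val = 0 then (W0 *ᵥ u) j else 0 := by
    intro k j
    by_cases hk : k.val = 0 <;>
      simp [Matrix.mulVec, dotProduct, hk]
  -- D11 * v at row 0
  have hD11v0 : ∀ (v : Fin L × Fin h → ℝ) (k : Fin L) (j : Fin h), k.val = 0 →
      ((fun kj k'j' => if kj.1.val = k'j'.1.val + 1 then Wh kj.1.val kj.2 k'j'.2 else 0 :
        Matrix (Fin L × Fin h) (Fin L × Fin h) ℝ) *ᵥ v) (k, j) = 0 := by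
    intro v k j hk
    simp only [Matrix.mulVec]
    simp only [dotProduct]
    apply Finset.sum_eq_zero
    intro k'j' _
    rw [if_neg (by omega)]
    ring
  -- D11 * v at row n+1
  have hD11vs : ∀ (v : Fin L × Fin h → ℝ) (k : Fin L) (j : Fin h) (hk : 0 < k.val),
      ((fun kj k'j' => if kj.1.val = k'j'.1.val + 1 then Wh kj.1.val kj.2 k'j'.2 else 0 :
        Matrix (Fin L × Fin h) (Fin L × Fin h) ℝ) *ᵥ v) (k, j)
        = ∑ j' : Fin h, Wh k.val j j' * v (⟨k.val - 1, by omega⟩, j') := by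
    intro v k j hk
    simp only [Matrix.mulVec]
    simp only [dotProduct]
    rw [Fintype.sum_prod_type]
    rw [Finset.sum_eq_single (⟨k.val - 1, by omega⟩ : Fin L)]
    · apply Finset.sum_congr rfl
      intro j' _
      rw [if_pos (show k.val = (⟨k.val - 1, by omega⟩ : Fin L).val + 1 by simp; omega)]
    · intro k' _ hk'
      apply Finset.sum_eq_zero
      intro j' _
      have hne : k'.val ≠ k.val - 1 := by
        intro hc; apply hk'; apply Fin.ext; simp [hc]
      rw [if_neg (show ¬(k.val = k'.val + 1) by omega)]
      ring
    · intro hmem; exact absurd (Finset.mem_univ _) hmem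
  -- the fixed point equation, for any function agreeing appropriately (we just prove for w)
  have hfix : w = fun kj => σ
      (((fun kj k'j' => if kj.1.val = k'j'.1.val + 1 then Wh kj.1.val kj.2 k'j'.2 else 0 :
          Matrix (Fin L × Fin h) (Fin L × Fin h) ℝ) *ᵥ w) kj
        + ((fun kj j => if kj.1.val = 0 then W0 kj.2 j else 0 :
            Matrix (Fin L × Fin h) (Fin m) ℝ) *ᵥ u) kj + b kj.1.val kj.2) := by
    funext kj
    obtain ⟨k, j⟩ := kj
    rcases Nat.eq_zero_or_pos k.val with hk | hk
    · rw [hD11v0 w k j hk, hD12v k j, if_pos hk, zero_add, hw]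
      simp only [hk]
      rw [hz1]
    · rw [hD11vs w k j hk, hD12v k j, if_neg (by omega), add_zero, hw]
      simp only
      have hk1 : k.val - 1 + 1 = k.val := by omega
      have : (∑ j' : Fin h, Wh k.val j j' * z (k.val - 1 + 1) j')
          = (Wh k.val *ᵥ z k.val) j := by
        rw [Matrix.mulVec]
        simp only [dotProduct, hk1]
      rw [this]
      have := hzs k.val hk
      rw [congrFun this j]
  refine ⟨hfix, ?_, ?_⟩
  · intro w' hw'
    funext kj
    obtain ⟨k, j⟩ := kj
    -- strong induction on k.val
    suffices H : ∀ n : ℕ, ∀ k : Fin L, k.val = n → ∀ j : Fin h, w' (k, j) = w (k, j) from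
      H k.val k rfl j
    intro n
    induction n with
    | zero =>
      intro k hk j
      rw [congrFun hw' (k, j), congrFun hfix (k, j),
        hD11v0 w' k j hk, hD11v0 w k j hk]
    | succ n ih =>
      intro k hk j
      have hkpos : 0 < k.val := by omega
      rw [congrFun hw' (k, j), congrFun hfix (k, j),
        hD11vs w' k j hkpos, hD11vs w k j hkpos]
      congr 3
      apply Finset.sum_congr rfl
      intro j' _
      rw [ih ⟨k.val - 1, by omega⟩ (by simp; omega) j']
  · funext i
    congr 1
    symm
    simp only [Matrix.mulVec.eq_1 (fun i kj => if kj.1.val = L - 1 then WL i kj.2 else 0 : Matrix (Fin p) (Fin L × Fin h) ℝ)]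
    simp only [dotProduct]
    rw [Fintype.sum_prod_type]
    rw [Finset.sum_eq_single (⟨L - 1, by omega⟩ : Fin L)]
    · rw [Matrix.mulVec]
      simp only [dotProduct]
      apply Finset.sum_congr rfl
      intro j' _
      rw [hw]
      have hL1 : L - 1 + 1 = L := by omega
      simp [hL1]
    · intro k' _ hk'
      apply Finset.sum_eq_zero
      intro j' _
      have hne : k'.val ≠ L - 1 := by
        intro hc; apply hk'; apply Fin.ext; simp [hc]
      rw [if_neg (show ¬(k'.val = L - 1) from hne)]
      ring
    · intro hmem; exact absurd (Finset.mem_univ _) hmem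
end
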